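/- Every regular perfect fluid solution with non-decreasing equation of state obeys the complete Buchdahl inequality 2m(r)/r ≤ (4/9)·(1 − 6π r² p(r) + √(1 + 6π r² p(r))) for all r ∈ (0,R). -/

import Mathlib

/-- The key quantity `φ(t) = 2t³√(1−2m(t)/t) / (m(t)+4πt³p(t))`. -/
noncomputable def buchdahlPhi (m p : ℝ → ℝ) : ℝ → ℝ :=
  fun t => 2 * t ^ 3 * Real.sqrt (1 - 2 * m t / t) / (m t + 4 * Real.pi * t ^ 3 * p t)

/-- The comparison function `G(t) = (1 − √(1−2wt²))/w`. -/
noncomputable def buchdahlG (w : ℝ) : ℝ → ℝ :=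
  fun t => (1 - Real.sqrt (1 - 2 * w * t ^ 2)) / w

lemma buchdahl_tov_clean (π s v M P ρ : ℝ) (hs : s ≠ 0) (hρ : ρ ≠ 0) (hM : M ≠ 0) (hv : v ≠ 0) :
    -((ρ + P) * (M + 4 * π * s ^ 3 * P)) / (s ^ 2 * v)
      = -(ρ * M / s ^ 2) * (1 + P / ρ) * (1 + 4 * π * s ^ 3 * P / M) * v⁻¹ := by
  field_simp

lemma buchdahl_identity (π s Y M P ρ : ℝ) (hs : s ≠ 0) (hY : Y ≠ 0)
    (hn : M + 4 * π * s ^ 3 * P ≠ 0) :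
    ((6 * s ^ 2 * Y + 2 * s ^ 3 * ((2 * M / s ^ 2 - 8 * π * s * ρ) / (2 * Y)))
        * (M + 4 * π * s ^ 3 * P)
      - 2 * s ^ 3 * Y * (4 * π * s ^ 2 * ρ + (12 * π * s ^ 2 * P + 4 * π * s ^ 3 *
          (-((ρ + P) * (M + 4 * π * s ^ 3 * P)) / (s ^ 2 * Y ^ 2)))))
      / (M + 4 * π * s ^ 3 * P) ^ 2
    - 2 * s / Y
    = 2 * s ^ 2 * Y * (3 * M - 4 * π * s ^ 3 * ρ) / (M + 4 * π * s ^ 3 * P) ^ 2 := by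
  rw [div_sub_div _ _ (pow_ne_zero 2 hn) hY, div_eq_div_iff (mul_ne_zero (pow_ne_zero 2 hn) hY) (pow_ne_zero 2 hn)]
  field_simp
  ring

/-- Pointwise Riccati-type differential inequality for `buchdahlPhi`. -/
lemma buchdahlPhi_deriv (f m p : ℝ → ℝ) (s : ℝ)
    (hs0 : 0 < s) (hM : 0 < m s) (hP : 0 < p s) (hρ : 0 < f (p s))
    (hu : 0 < 1 - 2 * m s / s)
    (hdm : HasDerivAt m (4 * Real.pi * s ^ 2 * f (p s)) s)
    (hdp : HasDerivAt p (-(f (p s) * m s / s ^ 2) * (1 + p s / f (p s)) *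
        (1 + 4 * Real.pi * s ^ 3 * p s / m s) * (1 - 2 * m s / s)⁻¹) s)
    (hdens : 4 * Real.pi * s ^ 3 * f (p s) ≤ 3 * m s) :
    ∃ d, HasDerivAt (buchdahlPhi m p) d s ∧ 2 * s / Real.sqrt (1 - 2 * m s / s) ≤ d := by
  have hπ : (0:ℝ) < Real.pi := Real.pi_pos
  have hsne : s ≠ 0 := ne_of_gt hs0
  have hMne : m s ≠ 0 := ne_of_gt hM
  have hρne : f (p s) ≠ 0 := ne_of_gt hρ
  have hune : (1 : ℝ) - 2 * m s / s ≠ 0 := ne_of_gt hu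
  have hYpos : 0 < Real.sqrt (1 - 2 * m s / s) := Real.sqrt_pos.mpr hu
  have hYne : Real.sqrt (1 - 2 * m s / s) ≠ 0 := ne_of_gt hYpos
  have hY2 : Real.sqrt (1 - 2 * m s / s) ^ 2 = 1 - 2 * m s / s := Real.sq_sqrt hu.le
  have hn : 0 < m s + 4 * Real.pi * s ^ 3 * p s := by
    have h3 : 0 < s ^ 3 := pow_pos hs0 3
    have : 0 < 4 * Real.pi * s ^ 3 * p s := by positivity
    linarith
  have hnne : m s + 4 * Real.pi * s ^ 3 * p s ≠ 0 := ne_of_gt hn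
  -- clean form of the pressure derivative
  have hdp' : HasDerivAt p
      (-((f (p s) + p s) * (m s + 4 * Real.pi * s ^ 3 * p s)) /
        (s ^ 2 * Real.sqrt (1 - 2 * m s / s) ^ 2)) s := by
    convert hdp using 1
    rw [hY2]
    exact buchdahl_tov_clean Real.pi s (1 - 2 * m s / s) (m s) (p s) (f (p s))
      hsne hρne hMne hune
  -- derivative of the square-root factor
  have hq : HasDerivAt (fun t => 1 - 2 * m t / t)
      (2 * m s / s ^ 2 - 8 * Real.pi * s * f (p s)) s := by
    have h1 : HasDerivAt (fun t => 2 * m t / t)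
        ((2 * (4 * Real.pi * s ^ 2 * f (p s)) * s - 2 * m s * 1) / s ^ 2) s :=
      (hdm.const_mul 2).div (hasDerivAt_id s) hsne
    have h2 := h1.const_sub 1
    refine h2.congr_deriv ?_
    field_simp
    ring
  have hsq : HasDerivAt (fun t => Real.sqrt (1 - 2 * m t / t))
      ((2 * m s / s ^ 2 - 8 * Real.pi * s * f (p s)) /
        (2 * Real.sqrt (1 - 2 * m s / s))) s := by
    have h3 := (Real.hasDerivAt_sqrt hune).comp s hq
    refine h3.congr_deriv ?_
    ring
  have hcube : HasDerivAt (fun t : ℝ => 2 * t ^ 3) (6 * s ^ 2) s := by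
    have := (hasDerivAt_pow 3 s).const_mul (2:ℝ)
    refine this.congr_deriv ?_
    push_cast
    ring
  have hN : HasDerivAt (fun t => 2 * t ^ 3 * Real.sqrt (1 - 2 * m t / t))
      (6 * s ^ 2 * Real.sqrt (1 - 2 * m s / s) +
        2 * s ^ 3 * ((2 * m s / s ^ 2 - 8 * Real.pi * s * f (p s)) /
          (2 * Real.sqrt (1 - 2 * m s / s)))) s := hcube.mul hsq
  have hcube4 : HasDerivAt (fun t : ℝ => 4 * Real.pi * t ^ 3) (12 * Real.pi * s ^ 2) s := by
    have := (hasDerivAt_pow 3 s).const_mul (4 * Real.pi)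
    refine this.congr_deriv ?_
    push_cast
    ring
  have hden : HasDerivAt (fun t => m t + 4 * Real.pi * t ^ 3 * p t)
      (4 * Real.pi * s ^ 2 * f (p s) + (12 * Real.pi * s ^ 2 * p s + 4 * Real.pi * s ^ 3 *
        (-((f (p s) + p s) * (m s + 4 * Real.pi * s ^ 3 * p s)) /
          (s ^ 2 * Real.sqrt (1 - 2 * m s / s) ^ 2)))) s :=
    hdm.add (hcube4.mul hdp')
  have hφd : HasDerivAt (buchdahlPhi m p)
      (((6 * s ^ 2 * Real.sqrt (1 - 2 * m s / s) +
        2 * s ^ 3 * ((2 * m s / s ^ 2 - 8 * Real.pi * s * f (p s)) /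
          (2 * Real.sqrt (1 - 2 * m s / s)))) * (m s + 4 * Real.pi * s ^ 3 * p s) -
        2 * s ^ 3 * Real.sqrt (1 - 2 * m s / s) *
        (4 * Real.pi * s ^ 2 * f (p s) + (12 * Real.pi * s ^ 2 * p s + 4 * Real.pi * s ^ 3 *
          (-((f (p s) + p s) * (m s + 4 * Real.pi * s ^ 3 * p s)) /
            (s ^ 2 * Real.sqrt (1 - 2 * m s / s) ^ 2))))) /
        (m s + 4 * Real.pi * s ^ 3 * p s) ^ 2) s := hN.div hden hnne
  refine ⟨_, hφd, ?_⟩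
  have hident := buchdahl_identity Real.pi s (Real.sqrt (1 - 2 * m s / s)) (m s) (p s)
    (f (p s)) hsne hYne hnne
  have hnum : 0 ≤ 2 * s ^ 2 * Real.sqrt (1 - 2 * m s / s) *
      (3 * m s - 4 * Real.pi * s ^ 3 * f (p s)) /
      (m s + 4 * Real.pi * s ^ 3 * p s) ^ 2 := by
    apply div_nonneg _ (sq_nonneg _)
    apply mul_nonneg (by positivity)
    linarith
  linarith [hident, hnum]


/-- Closing algebra: from the integrated inequality deduce the complete Buchdahl bound. -/
lemma buchdahl_algebra (π r M P Y : ℝ) (hπ : 0 < π) (hr : 0 < r) (hM : 0 < M)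
    (hP : 0 < P) (hY : 0 < Y) (hY2 : Y ^ 2 = 1 - 2 * M / r)
    (hineq : (1 - Y) / (M / r ^ 3) ≤ 2 * r ^ 3 * Y / (M + 4 * π * r ^ 3 * P)) :
    2 * M / r ≤ 4 / 9 * (1 - 6 * π * r ^ 2 * P + Real.sqrt (1 + 6 * π * r ^ 2 * P)) := by
  have hrne : r ≠ 0 := ne_of_gt hr
  have hn : 0 < M + 4 * π * r ^ 3 * P := by positivity
  have hw : 0 < M / r ^ 3 := by positivity
  have hA : (1 - Y) * (M + 4 * π * r ^ 3 * P) ≤ 2 * M * Y := by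
    rw [div_le_div_iff₀ hw hn] at hineq
    have he : 2 * r ^ 3 * Y * (M / r ^ 3) = 2 * M * Y := by field_simp
    rw [he] at hineq
    exact hineq
  have h1 : M + 4 * π * r ^ 3 * P ≤ Y * (3 * M + 4 * π * r ^ 3 * P) := by nlinarith [hA]
  have h2 : (M + 4 * π * r ^ 3 * P) ^ 2 ≤ Y ^ 2 * (3 * M + 4 * π * r ^ 3 * P) ^ 2 := by
    have hYA : 0 ≤ Y * (3 * M + 4 * π * r ^ 3 * P) := le_trans hn.le h1
    have := mul_le_mul h1 h1 hn.le hYA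
    nlinarith [this]
  have hY2' : Y ^ 2 * r = r - 2 * M := by
    rw [hY2]; field_simp
  have e : r * (Y ^ 2 * (3 * M + 4 * π * r ^ 3 * P) ^ 2)
      = (r - 2 * M) * (3 * M + 4 * π * r ^ 3 * P) ^ 2 := by
    rw [← hY2']; ring
  have h2r : r * (M + 4 * π * r ^ 3 * P) ^ 2
      ≤ (r - 2 * M) * (3 * M + 4 * π * r ^ 3 * P) ^ 2 := by
    rw [← e]
    have := mul_le_mul_of_nonneg_left h2 hr.le
    linarith
  have h3' : 2 * M * ((3 * M + 4 * π * r ^ 3 * P) ^ 2)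
      ≤ 2 * M * (r * (4 * M + 8 * π * r ^ 3 * P)) := by nlinarith [h2r]
  have h3 : (3 * M + 4 * π * r ^ 3 * P) ^ 2 ≤ r * (4 * M + 8 * π * r ^ 3 * P) :=
    (mul_le_mul_iff_right₀ (by positivity : (0:ℝ) < 2 * M)).mp h3'
  set x := 6 * π * r ^ 2 * P with hxdef
  set u := 2 * M / r with hudef
  have hu0 : 0 < u := by rw [hudef]; positivity
  have hx0 : 0 < x := by rw [hxdef]; positivity
  have h5 : ((9 * u + 4 * x) * r) ^ 2 ≤ (72 * u + 48 * x) * r ^ 2 := by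
    have e1 : (9 * u + 4 * x) * r = 6 * (3 * M + 4 * π * r ^ 3 * P) := by
      rw [hudef, hxdef]; field_simp; ring
    have e2 : (72 * u + 48 * x) * r ^ 2 = 36 * (r * (4 * M + 8 * π * r ^ 3 * P)) := by
      rw [hudef, hxdef]; field_simp; ring
    rw [e1, e2]
    nlinarith [h3]
  have ht : (9 * u + 4 * x) ^ 2 ≤ 72 * u + 48 * x := by
    have hr2 : 0 < r ^ 2 := pow_pos hr 2
    have h5' : (9 * u + 4 * x) ^ 2 * r ^ 2 ≤ (72 * u + 48 * x) * r ^ 2 := by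
      linear_combination h5
    exact le_of_mul_le_mul_right h5' hr2
  have hsq' : (9 * u + 4 * x - 4) ^ 2 ≤ 16 * (1 + x) := by nlinarith [ht]
  have hsqrt : 9 * u + 4 * x - 4 ≤ 4 * Real.sqrt (1 + x) := by
    have h1' : 9 * u + 4 * x - 4 ≤ |9 * u + 4 * x - 4| := le_abs_self _
    have h2' : |9 * u + 4 * x - 4| = Real.sqrt ((9 * u + 4 * x - 4) ^ 2) :=
      (Real.sqrt_sq_eq_abs _).symm
    have h3'' : Real.sqrt ((9 * u + 4 * x - 4) ^ 2) ≤ Real.sqrt (16 * (1 + x)) :=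
      Real.sqrt_le_sqrt hsq'
    have h4 : Real.sqrt (16 * (1 + x)) = 4 * Real.sqrt (1 + x) := by
      rw [show (16:ℝ) * (1 + x) = 4 ^ 2 * (1 + x) by ring,
        Real.sqrt_mul (by positivity), Real.sqrt_sq (by norm_num)]
    linarith
  linarith

lemma buchdahlG_deriv (w t : ℝ) (hw : w ≠ 0) (ha : 0 < 1 - 2 * w * t ^ 2) :
    HasDerivAt (buchdahlG w) (2 * t / Real.sqrt (1 - 2 * w * t ^ 2)) t := by
  have h1 : HasDerivAt (fun x : ℝ => 1 - 2 * w * x ^ 2)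
      (-(2 * w * (↑2 * t ^ 1))) t :=
    ((hasDerivAt_pow 2 t).const_mul (2 * w)).const_sub 1
  have h2 := (Real.hasDerivAt_sqrt (ne_of_gt ha)).comp t h1
  have h3 := (h2.const_sub 1).div_const w
  have hsne' : Real.sqrt (1 - 2 * w * t ^ 2) ≠ 0 :=
    ne_of_gt (Real.sqrt_pos.mpr ha)
  refine h3.congr_deriv ?_
  field_simp



set_option maxHeartbeats 1000000 in
/-- **The complete Buchdahl inequality.**
Every regular perfect fluid solution (units `G = c = 1`) with a non-decreasing equation of
state `ρ = f(p)` obeys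
`2m(r)/r ≤ (4/9)(1 − 6π r² p(r) + √(1 + 6π r² p(r)))` for all `r ∈ (0,R)`. -/
theorem complete_buchdahl_inequality
    (R : ℝ) (hR : 0 < R)
    (f : ℝ → ℝ)
    (hf_nonneg : ∀ q : ℝ, 0 ≤ q → 0 ≤ f q)
    (hf_mono : MonotoneOn f (Set.Ici 0))
    (hf_cont : ContinuousOn f (Set.Ici 0))
    (hf_pos : ∀ q : ℝ, 0 < q → 0 < f q)
    (m p : ℝ → ℝ)
    (hm_cont : ContinuousOn m (Set.Icc 0 R))
    (hp_cont : ContinuousOn p (Set.Icc 0 R))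
    (hm0 : m 0 = 0)
    (hm_pos : ∀ r ∈ Set.Ioo 0 R, 0 < m r)
    (h2m : ∀ r ∈ Set.Ioo 0 R, 2 * m r < r)
    (hp_pos : ∀ r ∈ Set.Ico 0 R, 0 < p r)
    (hpR : p R = 0)
    (hTOV_m : ∀ r ∈ Set.Ioo 0 R,
      HasDerivAt m (4 * Real.pi * r ^ 2 * f (p r)) r)
    (hTOV_p : ∀ r ∈ Set.Ioo 0 R,
      HasDerivAt p (-(f (p r) * m r / r ^ 2) * (1 + p r / f (p r)) *
        (1 + 4 * Real.pi * r ^ 3 * p r / m r) * (1 - 2 * m r / r)⁻¹) r)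
    (hreg : Filter.Tendsto (fun r => m r / r ^ 3) (nhdsWithin 0 (Set.Ioi 0))
      (nhds (4 * Real.pi / 3 * f (p 0)))) :
    ∀ r ∈ Set.Ioo 0 R,
      2 * m r / r ≤ 4 / 9 * (1 - 6 * Real.pi * r ^ 2 * p r
        + Real.sqrt (1 + 6 * Real.pi * r ^ 2 * p r)) := by
  have hπ : (0:ℝ) < Real.pi := Real.pi_pos
  have hppos : ∀ r ∈ Set.Ioo 0 R, 0 < p r := fun r hr => hp_pos r ⟨hr.1.le, hr.2⟩
  have hρpos : ∀ r ∈ Set.Ioo 0 R, 0 < f (p r) := fun r hr => hf_pos _ (hppos r hr)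
  have hupos : ∀ r ∈ Set.Ioo 0 R, 0 < 1 - 2 * m r / r := by
    intro r hr
    rw [sub_pos, div_lt_one hr.1]
    exact h2m r hr
  have hnpos : ∀ r ∈ Set.Ioo 0 R, 0 < m r + 4 * Real.pi * r ^ 3 * p r := by
    intro r hr
    have h1 := hm_pos r hr
    have h2 := hppos r hr
    have h3 : 0 < r ^ 3 := pow_pos hr.1 3
    have : 0 < 4 * Real.pi * r ^ 3 * p r := by positivity
    linarith
  -- Step 1 : the pressure is strictly decreasing on [0,R]
  have hp_anti : StrictAntiOn p (Set.Icc 0 R) := by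
    apply strictAntiOn_of_deriv_neg (convex_Icc 0 R) hp_cont
    intro x hx
    rw [interior_Icc] at hx
    rw [(hTOV_p x hx).deriv]
    have hA : 0 < f (p x) * m x / x ^ 2 :=
      div_pos (mul_pos (hρpos x hx) (hm_pos x hx)) (pow_pos hx.1 2)
    have hB : 0 < 1 + p x / f (p x) :=
      add_pos one_pos (div_pos (hppos x hx) (hρpos x hx))
    have hC : 0 < 1 + 4 * Real.pi * x ^ 3 * p x / m x := by
      have h1 := hppos x hx
      have h2 : 0 < x ^ 3 := pow_pos hx.1 3
      have h3 := hm_pos x hx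
      have : 0 < 4 * Real.pi * x ^ 3 * p x / m x := by positivity
      linarith
    have hD : 0 < (1 - 2 * m x / x)⁻¹ := inv_pos.mpr (hupos x hx)
    nlinarith [mul_pos (mul_pos (mul_pos hA hB) hC) hD]
  -- Step 2 : the mean density bound `4πr³ρ ≤ 3m`
  have hdens : ∀ r ∈ Set.Ioo 0 R, 4 * Real.pi * r ^ 3 * f (p r) ≤ 3 * m r := by
    intro r hr
    have hmono : MonotoneOn (fun s => m s - 4 * Real.pi / 3 * f (p r) * s ^ 3)
        (Set.Icc 0 r) := by
      have hders : ∀ x ∈ Set.Ioo 0 r,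
          HasDerivAt (fun s => m s - 4 * Real.pi / 3 * f (p r) * s ^ 3)
            (4 * Real.pi * x ^ 2 * f (p x) - 4 * Real.pi / 3 * f (p r) * (↑3 * x ^ 2)) x := by
        intro x hx
        exact (hTOV_m x ⟨hx.1, hx.2.trans hr.2⟩).sub
          ((hasDerivAt_pow 3 x).const_mul (4 * Real.pi / 3 * f (p r)))
      apply monotoneOn_of_deriv_nonneg (convex_Icc 0 r)
      · exact (hm_cont.mono (Set.Icc_subset_Icc_right hr.2.le)).sub
          (Continuous.continuousOn (by continuity))
      · intro x hx
        rw [interior_Icc] at hx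
        exact (hders x hx).differentiableAt.differentiableWithinAt
      · intro x hx
        rw [interior_Icc] at hx
        rw [(hders x hx).deriv]
        have hx' : x ∈ Set.Ioo 0 R := ⟨hx.1, hx.2.trans hr.2⟩
        have hfle : f (p r) ≤ f (p x) := by
          apply hf_mono (Set.mem_Ici.mpr (hppos r hr).le) (Set.mem_Ici.mpr (hppos x hx').le)
          exact (hp_anti ⟨hx.1.le, (hx.2.trans hr.2).le⟩ ⟨hr.1.le, hr.2.le⟩ hx.2).le
        have hx2 : (0:ℝ) ≤ x ^ 2 := sq_nonneg x
        push_cast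
        nlinarith [mul_nonneg (mul_nonneg (by linarith : (0:ℝ) ≤ 4 * Real.pi) hx2)
          (sub_nonneg.mpr hfle)]
    have h0 := hmono (Set.left_mem_Icc.mpr hr.1.le) (Set.right_mem_Icc.mpr hr.1.le) hr.1.le
    simp only [hm0] at h0
    nlinarith [h0]
  -- Step 3 : the mean density `m r / r³` is non-increasing
  have hw : ∀ s r : ℝ, s ∈ Set.Ioo 0 R → r ∈ Set.Ioo 0 R → s ≤ r →
      m r * s ^ 3 ≤ m s * r ^ 3 := by
    intro s r hs hr hsr
    have hanti : AntitoneOn (fun t => m t / t ^ 3) (Set.Icc s r) := by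
      have hders : ∀ x ∈ Set.Icc s r,
          HasDerivAt (fun t => m t / t ^ 3)
            ((4 * Real.pi * x ^ 2 * f (p x) * x ^ 3 - m x * (↑3 * x ^ 2)) / (x ^ 3) ^ 2) x := by
        intro x hx
        have hx' : x ∈ Set.Ioo 0 R := ⟨lt_of_lt_of_le hs.1 hx.1, lt_of_le_of_lt hx.2 hr.2⟩
        exact (hTOV_m x hx').div (hasDerivAt_pow 3 x) (pow_ne_zero 3 (ne_of_gt hx'.1))
      apply antitoneOn_of_deriv_nonpos (convex_Icc s r)
      · intro x hx
        exact (hders x hx).continuousAt.continuousWithinAt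
      · intro x hx
        rw [interior_Icc] at hx
        exact (hders x (Set.mem_Icc_of_Ioo hx)).differentiableAt.differentiableWithinAt
      · intro x hx
        rw [interior_Icc] at hx
        rw [(hders x (Set.mem_Icc_of_Ioo hx)).deriv]
        have hx' : x ∈ Set.Ioo 0 R := ⟨lt_of_lt_of_le hs.1 hx.1.le, lt_of_le_of_lt hx.2.le hr.2⟩
        have hd := hdens x hx'
        apply div_nonpos_of_nonpos_of_nonneg _ (sq_nonneg _)
        push_cast
        nlinarith [hd, sq_nonneg x, pow_pos hx'.1 2]
    have h0 := hanti (Set.left_mem_Icc.mpr hsr) (Set.right_mem_Icc.mpr hsr) hsr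
    rw [div_le_div_iff₀ (pow_pos hr.1 3) (pow_pos hs.1 3)] at h0
    exact h0
  -- now fix the radius
  intro r₀ hr₀
  have hr0 : 0 < r₀ := hr₀.1
  have hM₀ := hm_pos r₀ hr₀
  have hP₀ := hppos r₀ hr₀
  have hu₀ := hupos r₀ hr₀
  have hw₀ : 0 < m r₀ / r₀ ^ 3 := div_pos hM₀ (pow_pos hr0 3)
  have hw₀ne : m r₀ / r₀ ^ 3 ≠ 0 := ne_of_gt hw₀
  -- the sqrt argument of G is positive on [0, r₀]
  have harg : ∀ t : ℝ, 0 ≤ t → t ≤ r₀ → 0 < 1 - 2 * (m r₀ / r₀ ^ 3) * t ^ 2 := by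
    intro t ht htr
    have h1 : 2 * (m r₀ / r₀ ^ 3) * t ^ 2 ≤ 2 * (m r₀ / r₀ ^ 3) * r₀ ^ 2 := by
      have := pow_le_pow_left₀ ht htr 2
      nlinarith [hw₀]
    have h2 : 2 * (m r₀ / r₀ ^ 3) * r₀ ^ 2 = 2 * m r₀ / r₀ := by
      field_simp
    linarith [hu₀]
  -- derivative of G
  have hGder : ∀ t : ℝ, 0 < t → t ≤ r₀ →
      HasDerivAt (buchdahlG (m r₀ / r₀ ^ 3))
        (2 * t / Real.sqrt (1 - 2 * (m r₀ / r₀ ^ 3) * t ^ 2)) t := by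
    intro t ht htr
    exact buchdahlG_deriv (m r₀ / r₀ ^ 3) t hw₀ne (harg t ht.le htr)
  -- comparison of the square roots
  have hYle : ∀ t : ℝ, t ∈ Set.Ioc 0 r₀ →
      Real.sqrt (1 - 2 * m t / t) ≤ Real.sqrt (1 - 2 * (m r₀ / r₀ ^ 3) * t ^ 2) := by
    intro t ht
    apply Real.sqrt_le_sqrt
    have hwt := hw t r₀ ⟨ht.1, lt_of_le_of_lt ht.2 hr₀.2⟩ hr₀ ht.2
    have ht0 : 0 < t := ht.1
    have h1 : 2 * (m r₀ / r₀ ^ 3) * t ^ 2 ≤ 2 * m t / t := by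
      rw [show 2 * (m r₀ / r₀ ^ 3) * t ^ 2 = 2 * m r₀ * t ^ 2 / r₀ ^ 3 by ring,
        div_le_div_iff₀ (pow_pos hr0 3) ht0]
      nlinarith [hwt]
    linarith
  -- the integration step
  have hstep : ∀ ε : ℝ, 0 < ε → ε ≤ r₀ →
      buchdahlG (m r₀ / r₀ ^ 3) r₀ ≤ buchdahlPhi m p r₀ + buchdahlG (m r₀ / r₀ ^ 3) ε := by
    intro ε hε hεr
    have hders : ∀ t ∈ Set.Icc ε r₀, ∃ d,
        HasDerivAt (fun t => buchdahlPhi m p t - buchdahlG (m r₀ / r₀ ^ 3) t) d t ∧ 0 ≤ d := by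
      intro t ht
      have ht0 : 0 < t := lt_of_lt_of_le hε ht.1
      have htR : t ∈ Set.Ioo 0 R := ⟨ht0, lt_of_le_of_lt ht.2 hr₀.2⟩
      obtain ⟨d, hd, hdge⟩ := buchdahlPhi_deriv f m p t ht0 (hm_pos t htR) (hppos t htR)
        (hρpos t htR) (hupos t htR) (hTOV_m t htR) (hTOV_p t htR) (hdens t htR)
      have hg := hGder t ht0 ht.2
      refine ⟨d - 2 * t / Real.sqrt (1 - 2 * (m r₀ / r₀ ^ 3) * t ^ 2), hd.sub hg, ?_⟩
      have hYpos : 0 < Real.sqrt (1 - 2 * m t / t) := Real.sqrt_pos.mpr (hupos t htR)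
      have h1 : 2 * t / Real.sqrt (1 - 2 * (m r₀ / r₀ ^ 3) * t ^ 2)
          ≤ 2 * t / Real.sqrt (1 - 2 * m t / t) :=
        div_le_div_of_nonneg_left (by linarith) hYpos (hYle t ⟨ht0, ht.2⟩)
      linarith
    have hmono : MonotoneOn (fun t => buchdahlPhi m p t - buchdahlG (m r₀ / r₀ ^ 3) t)
        (Set.Icc ε r₀) := by
      apply monotoneOn_of_deriv_nonneg (convex_Icc ε r₀)
      · intro t ht
        obtain ⟨d, hd, _⟩ := hders t ht
        exact hd.continuousAt.continuousWithinAt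
      · intro t ht
        rw [interior_Icc] at ht
        obtain ⟨d, hd, _⟩ := hders t (Set.mem_Icc_of_Ioo ht)
        exact hd.differentiableAt.differentiableWithinAt
      · intro t ht
        rw [interior_Icc] at ht
        obtain ⟨d, hd, h0⟩ := hders t (Set.mem_Icc_of_Ioo ht)
        rw [hd.deriv]
        exact h0
    have hle := hmono (Set.left_mem_Icc.mpr hεr) (Set.right_mem_Icc.mpr hεr) hεr
    have hεR : ε ∈ Set.Ioo 0 R := ⟨hε, lt_of_le_of_lt hεr hr₀.2⟩
    have hφε : 0 < buchdahlPhi m p ε := by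
      unfold buchdahlPhi
      exact div_pos (mul_pos (by positivity) (Real.sqrt_pos.mpr (hupos ε hεR))) (hnpos ε hεR)
    have hle' : buchdahlPhi m p ε - buchdahlG (m r₀ / r₀ ^ 3) ε
        ≤ buchdahlPhi m p r₀ - buchdahlG (m r₀ / r₀ ^ 3) r₀ := hle
    linarith
  -- pass to the limit ε → 0
  have hGφ : buchdahlG (m r₀ / r₀ ^ 3) r₀ ≤ buchdahlPhi m p r₀ := by
    apply le_of_forall_pos_le_add
    intro δ hδ
    have hδ2 : 0 < δ / 2 := half_pos hδ
    set ε := min r₀ (Real.sqrt (δ / 2)) with hεdef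
    have hε0 : 0 < ε := lt_min hr0 (Real.sqrt_pos.mpr hδ2)
    have hεr : ε ≤ r₀ := min_le_left _ _
    have hGε : buchdahlG (m r₀ / r₀ ^ 3) ε ≤ δ := by
      have ha := harg ε hε0.le hεr
      have harg1 : 1 - 2 * (m r₀ / r₀ ^ 3) * ε ^ 2 ≤ 1 := by nlinarith [hw₀, sq_nonneg ε]
      have hsle : 1 - 2 * (m r₀ / r₀ ^ 3) * ε ^ 2
          ≤ Real.sqrt (1 - 2 * (m r₀ / r₀ ^ 3) * ε ^ 2) :=
        (Real.le_sqrt ha.le ha.le).mpr (by nlinarith [ha, harg1])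
      have hεsq : ε ^ 2 ≤ δ / 2 := by
        have h1 : ε ≤ Real.sqrt (δ / 2) := min_le_right _ _
        have h2 := Real.sq_sqrt hδ2.le
        nlinarith [hε0]
      unfold buchdahlG
      rw [div_le_iff₀ hw₀]
      nlinarith [hw₀]
    have := hstep ε hε0 hεr
    linarith
  -- final algebra
  have hGr₀ : buchdahlG (m r₀ / r₀ ^ 3) r₀
      = (1 - Real.sqrt (1 - 2 * m r₀ / r₀)) / (m r₀ / r₀ ^ 3) := by
    unfold buchdahlG
    have harg_eq : 1 - 2 * (m r₀ / r₀ ^ 3) * r₀ ^ 2 = 1 - 2 * m r₀ / r₀ := by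
      field_simp
    rw [harg_eq]
  have hφr₀ : buchdahlPhi m p r₀
      = 2 * r₀ ^ 3 * Real.sqrt (1 - 2 * m r₀ / r₀) / (m r₀ + 4 * Real.pi * r₀ ^ 3 * p r₀) :=
    rfl
  rw [hGr₀, hφr₀] at hGφ
  exact buchdahl_algebra Real.pi r₀ (m r₀) (p r₀) (Real.sqrt (1 - 2 * m r₀ / r₀))
    hπ hr0 hM₀ hP₀ (Real.sqrt_pos.mpr hu₀) (Real.sq_sqrt hu₀.le) hGφ
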